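/- For even m = 2w, the generating function identity G_{ℓ,m}(X)·(1 − (ℓ−2)X − ⋯ − (ℓ−2)X^{w−1} + 2X^w − X^{w−1}) = 1 + 2X + ⋯ + 2X^{w−2} + X^{w−1} + 2X^w holds, where G_{ℓ,m} is the growth series of geodesics from the base point in X_{ℓ,m}, defined via the cone-type recursion with the extra transition allowing type-w vertices to be reached from both left and right. -/

import Mathlib

open Finset PowerSeries

/-- Geodesic counting sequence for `X_{ℓ,m}` with even `m = 2w`:
`geoCount ℓ w n t` is the number of geodesics of length `n` from the base point
ending at a vertex of cone type `t`.  The base point (type `0`) has `ℓ`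
transitions to type `1`; a vertex of type `t`, `0 < t < w`, gives `ℓ-3`
transitions to type `1`, one to type `2` and one to type `t+1`; type-`w`
vertices are reached from both their left and right predecessors (the extra
rule `X_{R,w-1} → e₁ X_{L,w}`), so every geodesic to a type-`(w-1)` vertex
extends to a geodesic to a type-`w` vertex; a vertex of type `w` gives `ℓ-4`
transitions to type `1` and two to type `2`. -/
def geoCount (ℓ w : ℕ) : ℕ → ℕ → ℚ
  | 0, t => if t = 0 then 1 else 0
  | n + 1, t =>
    if t = 1 then
      (ℓ : ℚ) * geoCount ℓ w n 0
        + ((ℓ : ℚ) - 3) * ∑ s ∈ Finset.Ico 1 w, geoCount ℓ w n s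
        + ((ℓ : ℚ) - 4) * geoCount ℓ w n w
    else if t = 2 then
      geoCount ℓ w n 1 + (∑ s ∈ Finset.Ico 1 w, geoCount ℓ w n s)
        + 2 * geoCount ℓ w n w
    else if 3 ≤ t ∧ t ≤ w then geoCount ℓ w n (t - 1)
    else 0

noncomputable def Gs (ℓ w t : ℕ) : PowerSeries ℚ := PowerSeries.mk fun n => geoCount ℓ w n t

lemma mk_shift (f : ℕ → ℚ) (g : PowerSeries ℚ) (h0 : f 0 = 0)
    (h : ∀ n, f (n + 1) = PowerSeries.coeff n g) :
    PowerSeries.mk f = PowerSeries.X * g := by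
  ext n
  cases n with
  | zero => simp [h0]
  | succ n => rw [coeff_succ_X_mul, coeff_mk, h]

lemma Gs_zero (ℓ w : ℕ) : Gs ℓ w 0 = 1 := by
  ext n
  cases n with
  | zero => simp [Gs, geoCount]
  | succ n => simp [Gs, geoCount]

lemma Gs_one (ℓ w : ℕ) (hw : 3 ≤ w) :
    Gs ℓ w 1 = PowerSeries.X * (C (ℓ : ℚ) * Gs ℓ w 0
      + (C ((ℓ : ℚ) - 3)) * (∑ s ∈ Finset.Ico 1 w, Gs ℓ w s)
      + (C ((ℓ : ℚ) - 4)) * Gs ℓ w w) := by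
  apply mk_shift
  · simp [geoCount]
  · intro n
    simp only [geoCount, Gs, map_add, coeff_C_mul, map_sum, coeff_mk, Finset.mul_sum]
    simp

lemma Gs_two (ℓ w : ℕ) (hw : 3 ≤ w) :
    Gs ℓ w 2 = PowerSeries.X * (Gs ℓ w 1
      + (∑ s ∈ Finset.Ico 1 w, Gs ℓ w s) + C (2 : ℚ) * Gs ℓ w w) := by
  apply mk_shift
  · simp [geoCount]
  · intro n
    simp only [geoCount, Gs, map_add, coeff_C_mul, map_sum, coeff_mk]
    simp

lemma Gs_succ (ℓ w t : ℕ) (h3 : 3 ≤ t) (htw : t ≤ w) :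
    Gs ℓ w t = PowerSeries.X * Gs ℓ w (t - 1) := by
  apply mk_shift
  · simp only [geoCount]
    rw [if_neg (by omega)]
  · intro n
    simp only [geoCount]
    rw [if_neg (by omega), if_neg (by omega), if_pos ⟨h3, htw⟩]
    simp [Gs]

lemma Gs_pow (ℓ w k : ℕ) (hk : k ≤ w - 2) (hw : 3 ≤ w) :
    Gs ℓ w (k + 2) = PowerSeries.X ^ k * Gs ℓ w 2 := by
  induction k with
  | zero => simp
  | succ k ih =>
    rw [show k + 1 + 2 = (k + 3) from rfl, Gs_succ ℓ w (k + 3) (by omega) (by omega)]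
    rw [show k + 3 - 1 = k + 2 from rfl, ih (by omega)]
    ring

lemma sum_Ico_Gs (ℓ w : ℕ) (hw : 3 ≤ w) :
    (∑ t ∈ Finset.Ico 1 w, Gs ℓ w t)
      = Gs ℓ w 1 + (∑ k ∈ Finset.range (w - 2), PowerSeries.X ^ k) * Gs ℓ w 2 := by
  rw [Finset.sum_eq_sum_Ico_succ_bot (by omega : 1 < w)]
  congr 1
  rw [Finset.sum_Ico_eq_sum_range, Finset.sum_mul]
  apply Finset.sum_congr (by norm_num)
  intro i hi
  simp only [Finset.mem_range] at hi
  rw [show 2 + i = i + 2 by omega, Gs_pow ℓ w i (by omega) hw]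

lemma sum_range_Gs (ℓ w : ℕ) (hw : 3 ≤ w) :
    (∑ t ∈ Finset.range (w + 1), Gs ℓ w t)
      = 1 + Gs ℓ w 1
        + ((∑ k ∈ Finset.range (w - 2), PowerSeries.X ^ k) + PowerSeries.X ^ (w - 2))
          * Gs ℓ w 2 := by
  rw [Finset.range_eq_Ico, Finset.sum_eq_sum_Ico_succ_bot (by omega : 0 < w + 1),
    Finset.sum_eq_sum_Ico_succ_bot (by omega : 1 < w + 1), Gs_zero]
  rw [Finset.sum_Ico_eq_sum_range, show w + 1 - 2 = (w - 2) + 1 by omega]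
  have : ∀ i ∈ Finset.range (w - 2 + 1), Gs ℓ w (2 + i) = PowerSeries.X ^ i * Gs ℓ w 2 := by
    intro i hi
    simp only [Finset.mem_range] at hi
    rw [show 2 + i = i + 2 by omega, Gs_pow ℓ w i (by omega) hw]
  rw [Finset.sum_congr rfl this, ← Finset.sum_mul, Finset.sum_range_succ,
    Finset.range_eq_Ico]
  ring

/-- For even `m = 2w`, the growth series `G_{ℓ,m}` of geodesics from
the base point in `X_{ℓ,m}` satisfies
`G_{ℓ,m}(X)·(1 - (ℓ-2)X - ⋯ - (ℓ-2)X^{w-1} + 2X^w - X^{w-1})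
  = 1 + 2X + ⋯ + 2X^{w-2} + X^{w-1} + 2X^w` as formal power series. -/
theorem growth_series_geodesics (ℓ w : ℕ) (hℓ : 3 ≤ ℓ) (hw : 3 ≤ w) :
    (PowerSeries.mk fun n => ∑ t ∈ Finset.range (w + 1), geoCount ℓ w n t) *
        (1 - ((ℓ : ℚ) - 2) • (∑ k ∈ Finset.Ico 1 w, (PowerSeries.X : PowerSeries ℚ) ^ k)
          + 2 * (PowerSeries.X : PowerSeries ℚ) ^ w
          - (PowerSeries.X : PowerSeries ℚ) ^ (w - 1))
      = 1 + (∑ k ∈ Finset.Ico 1 (w - 1), 2 * (PowerSeries.X : PowerSeries ℚ) ^ k)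
          + (PowerSeries.X : PowerSeries ℚ) ^ (w - 1)
          + 2 * (PowerSeries.X : PowerSeries ℚ) ^ w := by
  -- abbreviations
  set x : PowerSeries ℚ := PowerSeries.X with hxdef
  set s : PowerSeries ℚ := ∑ k ∈ Finset.range (w - 2), x ^ k with hsdef
  set a : PowerSeries ℚ := Gs ℓ w 1 with hadef
  set b : PowerSeries ℚ := Gs ℓ w 2 with hbdef
  set y : PowerSeries ℚ := x ^ (w - 2) with hydef
  set L : PowerSeries ℚ := C (ℓ : ℚ) with hLdef
  -- the mk series is 1 + a + (s+y) b
  have hmk : (PowerSeries.mk fun n => ∑ t ∈ Finset.range (w + 1), geoCount ℓ w n t)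
      = 1 + a + (s + y) * b := by
    have : (PowerSeries.mk fun n => ∑ t ∈ Finset.range (w + 1), geoCount ℓ w n t)
        = ∑ t ∈ Finset.range (w + 1), Gs ℓ w t := by
      ext n; simp [Gs]
    rw [this, sum_range_Gs ℓ w hw]
  -- power rewrites
  have hw1 : (PowerSeries.X : PowerSeries ℚ) ^ (w - 1) = y * x := by
    rw [hydef, ← pow_succ, show w - 2 + 1 = w - 1 by omega]
  have hww : (PowerSeries.X : PowerSeries ℚ) ^ w = y * x ^ 2 := by
    rw [hydef, ← pow_add, show w - 2 + 2 = w by omega]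
  -- Ico sums in the statement
  have hP : (∑ k ∈ Finset.Ico 1 w, (PowerSeries.X : PowerSeries ℚ) ^ k) = x * (s + y) := by
    rw [Finset.sum_Ico_eq_sum_range]
    simp only [pow_add, pow_one]
    rw [← Finset.mul_sum, show w - 1 = (w - 2) + 1 by omega, Finset.sum_range_succ]
  have hQ : (∑ k ∈ Finset.Ico 1 (w - 1), 2 * (PowerSeries.X : PowerSeries ℚ) ^ k)
      = 2 * (x * s) := by
    rw [Finset.sum_Ico_eq_sum_range, show w - 1 - 1 = w - 2 by omega]
    simp only [pow_add, pow_one]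
    rw [← Finset.mul_sum, ← Finset.mul_sum, ← mul_assoc, mul_comm (2 : PowerSeries ℚ) x,
      mul_assoc]
  -- the three relations
  have hGw : Gs ℓ w w = y * b := by
    have h := Gs_pow ℓ w (w - 2) le_rfl hw
    rw [show w - 2 + 2 = w by omega] at h
    rw [h, hydef, hbdef, hxdef]
  have h1 : a = x * (L * 1 + (L - 3) * (a + s * b) + (L - 4) * (y * b)) := by
    conv_lhs => rw [hadef, Gs_one ℓ w hw]
    rw [Gs_zero, sum_Ico_Gs ℓ w hw, hGw]
    simp only [map_sub, map_ofNat, ← hLdef, ← hxdef, ← hsdef, ← hadef, ← hbdef, ← hydef]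
  have h2 : b = x * (a + (a + s * b) + 2 * (y * b)) := by
    conv_lhs => rw [hbdef, Gs_two ℓ w hw]
    rw [sum_Ico_Gs ℓ w hw, hGw]
    simp only [map_ofNat, ← hLdef, ← hxdef, ← hsdef, ← hadef, ← hbdef, ← hydef]
  have h3 : s * (x - 1) = y - 1 := by
    rw [hsdef, hydef]; exact geom_sum_mul x (w - 2)
  -- scalar multiplication as multiplication by a constant
  have hsm : ((ℓ : ℚ) - 2) • (x * (s + y)) = (L - 2) * (x * (s + y)) := by
    rw [PowerSeries.smul_eq_C_mul, map_sub, map_ofNat, hLdef]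
  rw [hmk, hP, hQ, hw1, hww, hsm]
  linear_combination (1 + x * s) * h1 + (1 - x + 2 * x * s - x ^ 2 * s) * h2
    - (b - x * b + x * a + 2 * x * s * b + x * y * b + 2 * x ^ 2 * a + x ^ 2 * s * b
        + 2 * x ^ 2 * y * b - L * x - L * x * a - L * x * s * b - L * x * y * b) * h3
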